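/- Let X be a real Banach space and H a C^q K-map on X which coincides with the identity on the open ball {‖x‖ < ρ} and satisfies ‖H(x)‖ ≤ N for all x. Let z ∈ X, r > 0, and let Y be a Banach space. Then for every R > N·r/ρ and every C^q map f defined on the open ball of radius R around z with values in Y, there exists a C^q map F : X → Y defined on all of X that coincides with f on a neighborhood of the closed ball B̄(z, r). -/

import Mathlib

open Metric Filter

/-- Let `H` be a `C^q` K-map on `X` equal to the identity on the open ball of radius `ρ`
about `0` and with `‖H x‖ ≤ N` for all `x`.  Then for every `z ∈ X`, `r > 0`, every
`R > N * r / ρ` and every `C^q` map `f` on the open ball of radius `R` around `z` with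
values in a Banach space `Y`, there is a `C^q` map `F : X → Y` coinciding with `f` on a
neighborhood of the closed ball `B̄(z, r)`. -/
theorem extension_from_ball
    {X : Type*} [NormedAddCommGroup X] [NormedSpace ℝ X] [CompleteSpace X]
    (q : ℕ∞) (H : X → X) (ρ N : ℝ) (hρ : 0 < ρ)
    (hH : ContDiff ℝ q H)
    (hHid : ∀ x : X, ‖x‖ < ρ → H x = x)
    (hHbdd : ∀ x : X, ‖H x‖ ≤ N)
    (z : X) (r : ℝ) (hr : 0 < r)
    {Y : Type*} [NormedAddCommGroup Y] [NormedSpace ℝ Y] [CompleteSpace Y]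
    (R : ℝ) (hR : N * r / ρ < R)
    (f : X → Y) (hf : ContDiffOn ℝ q f (ball z R)) :
    ∃ F : X → Y, ContDiff ℝ q F ∧
      ∀ᶠ x in nhdsSet (closedBall z r), F x = f x := by
  have hN0 : 0 ≤ N := le_trans (norm_nonneg _) (hHbdd 0)
  have hRpos : 0 < R := lt_of_le_of_lt (by positivity) hR
  -- choose r' with r < r' and N * r' / ρ < R
  obtain ⟨r', hrr', hr'R⟩ : ∃ r', r < r' ∧ N * r' / ρ < R := by
    rcases eq_or_lt_of_le hN0 with h | h
    · exact ⟨r + 1, by linarith, by rw [← h]; simpa using hRpos⟩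
    · refine ⟨(r + ρ * R / N) / 2, ?_, ?_⟩
      · have : r < ρ * R / N := by
          rw [lt_div_iff₀ h]
          have := (div_lt_iff₀ hρ).mp hR
          nlinarith
        linarith
      · rw [div_lt_iff₀ hρ]
        have : N * r < R * ρ := by
          have := (div_lt_iff₀ hρ).mp hR
          linarith
        have hNρ : N * (ρ * R / N) = ρ * R := by field_simp
        nlinarith [mul_div_cancel₀ (ρ * R) (ne_of_gt h)]
  have hr'pos : 0 < r' := hr.trans hrr'
  set c : ℝ := ρ / r' with hc
  have hcpos : 0 < c := div_pos hρ hr'pos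
  set G : X → X := fun x => z + (r' / ρ) • H (c • (x - z)) with hG
  -- G maps everything into ball z R
  have hmaps : ∀ x, G x ∈ ball z R := by
    intro x
    simp only [hG, mem_ball, dist_eq_norm]
    have : ‖z + (r' / ρ) • H (c • (x - z)) - z‖ = (r' / ρ) * ‖H (c • (x - z))‖ := by
      rw [add_sub_cancel_left, norm_smul, Real.norm_eq_abs,
        abs_of_pos (div_pos hr'pos hρ)]
    rw [this]
    calc (r' / ρ) * ‖H (c • (x - z))‖ ≤ (r' / ρ) * N :=
          mul_le_mul_of_nonneg_left (hHbdd _) (le_of_lt (div_pos hr'pos hρ))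
      _ = N * r' / ρ := by ring
      _ < R := hr'R
  -- G is the identity on ball z r'
  have hGid : ∀ x ∈ ball z r', G x = x := by
    intro x hx
    have hn : ‖c • (x - z)‖ < ρ := by
      rw [norm_smul, Real.norm_eq_abs, abs_of_pos hcpos]
      have : ‖x - z‖ < r' := by rwa [mem_ball, dist_eq_norm] at hx
      calc c * ‖x - z‖ < c * r' := by exact mul_lt_mul_of_pos_left this hcpos
        _ = ρ := by rw [hc]; field_simp [hr'pos.ne', hρ.ne']
    rw [hG]
    simp only
    rw [hHid _ hn, smul_smul]
    have : (r' / ρ) * c = 1 := by rw [hc]; field_simp [hr'pos.ne', hρ.ne']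
    rw [this, one_smul, add_sub_cancel]
  have hGc : ContDiff ℝ q G := by
    apply ContDiff.add contDiff_const
    apply ContDiff.smul contDiff_const
    exact hH.comp ((contDiff_const.smul (contDiff_id.sub contDiff_const)))
  refine ⟨f ∘ G, hf.comp_contDiff hGc hmaps, ?_⟩
  have hsub : closedBall z r ⊆ ball z r' := closedBall_subset_ball hrr'
  filter_upwards [(isOpen_ball.mem_nhdsSet).mpr hsub] with x hx
  simp only [Function.comp_apply, hGid x hx]
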